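/- Let g ≥ 1 and n ≥ g be integers, and define the integer b₀(n) as follows: if n ≡ g (mod 2), b₀(n) = det( c_{g+i+j−2} )_{1 ≤ i,j ≤ (n−g)/2}; if n ≡ g + 1 (mod 2), b₀(n) = det( c_{g+i+j−1} )_{1 ≤ i,j ≤ (n−g−1)/2} (the determinant of the empty matrix being 1). Then b₀(n) ≠ 0, and for every prime number ℓ: if ℓ does not divide the product (n−g+1)(n−g+2)⋯(n+g−1), then ℓ does not divide b₀(n). -/

import Mathlib

/-- Ballot numbers: `bal n k` = number of nonnegative lattice paths of length
`n` from `0` to `k`. -/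
def bal : ℕ → ℕ → ℕ
  | 0, 0 => 1
  | 0, _+1 => 0
  | n+1, 0 => bal n 1
  | n+1, k+1 => bal n k + bal n (k+2)

@[simp] lemma bal_zero_zero : bal 0 0 = 1 := rfl
@[simp] lemma bal_zero_succ (k : ℕ) : bal 0 (k+1) = 0 := rfl
@[simp] lemma bal_succ_zero (n : ℕ) : bal (n+1) 0 = bal n 1 := rfl
@[simp] lemma bal_succ_succ (n k : ℕ) : bal (n+1) (k+1) = bal n k + bal n (k+2) := rfl

lemma bal_eq_zero_of_lt : ∀ n k, n < k → bal n k = 0 := by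
  intro n
  induction n with
  | zero => intro k hk; cases k with
    | zero => omega
    | succ k => rfl
  | succ n ih =>
    intro k hk
    cases k with
    | zero => omega
    | succ k => simp [ih k (by omega), ih (k+2) (by omega)]

lemma bal_self : ∀ n, bal n n = 1 := by
  intro n
  induction n with
  | zero => rfl
  | succ n ih => simp [ih, bal_eq_zero_of_lt n (n+2) (by omega)]

lemma bal_parity : ∀ n k, (n + k) % 2 = 1 → bal n k = 0 := by
  intro n
  induction n with
  | zero => intro k hk; cases k with
    | zero => omega
    | succ k => rfl
  | succ n ih =>
    intro k hk
    cases k with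
    | zero => simpa using ih 1 (by omega)
    | succ k => simp [ih k (by omega), ih (k+2) (by omega)]

open Finset in
/-- shuffle identity -/
lemma bal_sum_step (p q M : ℕ) :
    ∑ k ∈ range (M+1), bal (p+1) k * bal q k
      = ∑ k ∈ range M, bal p k * bal q (k+1)
        + ∑ k ∈ range (M+1), bal p (k+1) * bal q k := by
  rw [Finset.sum_range_succ' (fun k => bal (p+1) k * bal q k) M]
  rw [Finset.sum_range_succ' (fun k => bal p (k+1) * bal q k) M]
  simp only [bal_succ_succ, bal_succ_zero, add_mul]
  rw [Finset.sum_add_distrib]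
  ring

open Finset in
lemma bal_sum_swap (p q M : ℕ) (hp : p + 1 ≤ M) (hq : q + 1 ≤ M) :
    ∑ k ∈ range (M+1), bal (p+1) k * bal q k
      = ∑ k ∈ range (M+1), bal p k * bal (q+1) k := by
  rw [bal_sum_step p q M]
  have h2 : ∑ k ∈ range (M+1), bal p k * bal (q+1) k
      = ∑ k ∈ range M, bal q k * bal p (k+1)
        + ∑ k ∈ range (M+1), bal q (k+1) * bal p k := by
    have := bal_sum_step q p M
    simp only [mul_comm] at this ⊢
    exact this
  rw [h2]
  have e1 : ∑ k ∈ range (M+1), bal p (k+1) * bal q k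
      = ∑ k ∈ range M, bal q k * bal p (k+1) := by
    rw [Finset.sum_range_succ]
    rw [bal_eq_zero_of_lt p (M+1) (by omega)]
    simp [mul_comm]
  have e2 : ∑ k ∈ range (M+1), bal q (k+1) * bal p k
      = ∑ k ∈ range M, bal p k * bal q (k+1) := by
    rw [Finset.sum_range_succ]
    rw [bal_eq_zero_of_lt q (M+1) (by omega)]
    simp [mul_comm]
  rw [e1, e2]; ring

open Finset in
/-- convolution over a large range -/
lemma bal_conv : ∀ p q M, p + q + 1 ≤ M →
    ∑ k ∈ range M, bal p k * bal q k = bal (p+q) 0 := by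
  intro p
  induction p with
  | zero =>
    intro q M hM
    obtain ⟨M', rfl⟩ : ∃ M', M = M' + 1 := ⟨M - 1, by omega⟩
    rw [Finset.sum_range_succ' (fun k => bal 0 k * bal q k) M']
    simp
  | succ p ih =>
    intro q M hM
    obtain ⟨M', rfl⟩ : ∃ M', M = M' + 1 := ⟨M - 1, by omega⟩
    rw [bal_sum_swap p q M' (by omega) (by omega)]
    rw [ih (q+1) (M'+1) (by omega)]
    congr 1
    omega

lemma bal_closed : ∀ n k, k ≤ n → (n + k) % 2 = 0 →
    bal n k + Nat.choose n ((n+k)/2 + 1) = Nat.choose n ((n+k)/2) := by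
  intro n
  induction n with
  | zero =>
    intro k hk _
    interval_cases k
    simp
  | succ n ih =>
    intro k hk hpar
    cases k with
    | zero =>
      -- n odd, n = 2t+1
      obtain ⟨t, rfl⟩ : ∃ t, n = 2*t + 1 := ⟨n/2, by omega⟩
      have IH := ih 1 (by omega) (by omega)
      have hu : (2*t+1+1)/2 = t + 1 := by omega
      rw [hu] at IH
      simp only [bal_succ_zero, Nat.add_zero, hu]
      have p1 : Nat.choose (2*t+1+1) (t+1+1) = Nat.choose (2*t+1) (t+1) + Nat.choose (2*t+1) (t+1+1) :=
        Nat.choose_succ_succ' (2*t+1) (t+1)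
      have p2 : Nat.choose (2*t+1+1) (t+0+1) = Nat.choose (2*t+1) (t+0) + Nat.choose (2*t+1) (t+0+1) :=
        Nat.choose_succ_succ' (2*t+1) (t+0)
      simp only [Nat.add_zero] at p2
      have sym : Nat.choose (2*t+1) (t+1) = Nat.choose (2*t+1) t := by
        rw [← Nat.choose_symm (by omega : t + 1 ≤ 2*t+1)]
        congr 1
        omega
      omega
    | succ k =>
      have hk' : k ≤ n := by omega
      have hpar' : (n + k) % 2 = 0 := by omega
      have IH1 := ih k hk' hpar'
      set v := (n + k)/2 with hv
      have hu : (n+1+(k+1))/2 = v + 1 := by omega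
      rw [hu]
      by_cases hk2 : k + 2 ≤ n
      · have IH2 := ih (k+2) hk2 (by omega)
        have hw : (n+(k+2))/2 = v + 1 := by omega
        rw [hw] at IH2
        simp only [bal_succ_succ]
        have p1 : Nat.choose (n+1) (v+1+1) = Nat.choose n (v+1) + Nat.choose n (v+1+1) :=
          Nat.choose_succ_succ' n (v+1)
        have p2 : Nat.choose (n+1) (v+0+1) = Nat.choose n (v+0) + Nat.choose n (v+0+1) :=
          Nat.choose_succ_succ' n (v+0)
        simp only [Nat.add_zero] at p2
        have IH2' : bal n (k+2) + Nat.choose n (v+1+1) = Nat.choose n (v+1) := IH2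
        omega
      · -- k = n
        have : k = n := by omega
        subst this
        have hvv : v = k := by omega
        simp only [bal_succ_succ, bal_self, bal_eq_zero_of_lt k (k+2) (by omega), hvv]
        have c1 : Nat.choose (k+1) (k+1+1) = 0 := Nat.choose_eq_zero_of_lt (by omega)
        have c2 : Nat.choose (k+1) (k+1) = 1 := Nat.choose_self _
        omega

lemma bal_even_zero (s : ℕ) : bal (2*s) 0 = catalan s := by
  have h := bal_closed (2*s) 0 (by omega) (by omega)
  have hs : (2*s+0)/2 = s := by omega
  rw [hs] at h
  have key : (s+1) * bal (2*s) 0 = (s+1) * catalan s := by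
    rw [succ_mul_catalan_eq_centralBinom, Nat.centralBinom]
    have h2 : Nat.choose (2*s) (s+1) * (s+1) = Nat.choose (2*s) s * (2*s - s) :=
      Nat.choose_succ_right_eq (2*s) s
    have h3 : 2*s - s = s := by omega
    rw [h3] at h2
    nlinarith [h, h2]
  exact Nat.eq_of_mul_eq_mul_left (by omega) key

open Finset in
lemma bal_conv_even (ε i j m : ℕ) (hε : ε ≤ 1) (hi : i < m) :
    ∑ k ∈ range m, bal (2*i+ε) (2*k+ε) * bal (2*j+ε) (2*k+ε) = catalan (i+j+ε) := by
  have step1 : ∑ k ∈ range m, bal (2*i+ε) (2*k+ε) * bal (2*j+ε) (2*k+ε)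
      = ∑ k ∈ range (i+1), bal (2*i+ε) (2*k+ε) * bal (2*j+ε) (2*k+ε) := by
    symm
    apply Finset.sum_subset
    · intro x hx
      simp only [mem_range] at hx ⊢
      omega
    · intro x hx hx'
      simp only [mem_range] at hx hx'
      rw [bal_eq_zero_of_lt (2*i+ε) (2*x+ε) (by omega), zero_mul]
  have step2 : ∑ k ∈ range (i+1), bal (2*i+ε) (2*k+ε) * bal (2*j+ε) (2*k+ε)
      = ∑ k ∈ (range (i+1)).image (fun k => 2*k+ε), bal (2*i+ε) k * bal (2*j+ε) k := by
    rw [Finset.sum_image (fun a _ b _ hab => by omega : ∀ a ∈ range (i+1), ∀ b ∈ range (i+1), 2*a+ε = 2*b+ε → a = b)]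
  have step3 : ∑ k ∈ (range (i+1)).image (fun k => 2*k+ε), bal (2*i+ε) k * bal (2*j+ε) k
      = ∑ k ∈ range (2*i+ε+(2*j+ε)+1), bal (2*i+ε) k * bal (2*j+ε) k := by
    apply Finset.sum_subset
    · intro x hx
      simp only [Finset.mem_image, mem_range] at hx ⊢
      obtain ⟨a, ha, rfl⟩ := hx
      omega
    · intro x hx hx'
      simp only [Finset.mem_image, mem_range, not_exists] at hx hx'
      by_cases hpar : (2*i+ε+x) % 2 = 1
      · rw [bal_parity _ _ hpar, zero_mul]
      · by_cases hbig : 2*i+ε < x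
        · rw [bal_eq_zero_of_lt _ _ hbig, zero_mul]
        · exfalso
          have hrep : ∃ a, a < i + 1 ∧ 2*a+ε = x := ⟨(x-ε)/2, by omega⟩
          obtain ⟨a, ha1, ha2⟩ := hrep
          exact hx' a ⟨ha1, ha2⟩
  rw [step1, step2, step3]
  rw [bal_conv (2*i+ε) (2*j+ε) _ le_rfl]
  have h2 : 2*i+ε+(2*j+ε) = 2*(i+j+ε) := by omega
  rw [h2, bal_even_zero]

open Finset Matrix in
lemma det_hankel_base (ε m : ℕ) (hε : ε ≤ 1) :
    Matrix.det (Matrix.of fun i j : Fin m => (catalan (↑i + ↑j + ε) : ℤ)) = 1 := by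
  have hM : (Matrix.of fun i j : Fin m => (catalan (↑i + ↑j + ε) : ℤ))
      = (Matrix.of (fun i k : Fin m => (bal (2*(i:ℕ)+ε) (2*(k:ℕ)+ε) : ℤ)))
        * (Matrix.of (fun i k : Fin m => (bal (2*(i:ℕ)+ε) (2*(k:ℕ)+ε) : ℤ)))ᵀ := by
    ext i j
    rw [Matrix.mul_apply]
    simp only [Matrix.transpose_apply, Matrix.of_apply]
    have key : ∑ k : Fin m, (bal (2*(i:ℕ)+ε) (2*(k:ℕ)+ε) : ℤ) * (bal (2*(j:ℕ)+ε) (2*(k:ℕ)+ε) : ℤ)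
        = ((∑ k ∈ range m, bal (2*(i:ℕ)+ε) (2*k+ε) * bal (2*(j:ℕ)+ε) (2*k+ε) : ℕ) : ℤ) := by
      push_cast
      rw [Fin.sum_univ_eq_sum_range (fun k => (bal (2*(i:ℕ)+ε) (2*k+ε) : ℤ) * (bal (2*(j:ℕ)+ε) (2*k+ε) : ℤ))]
    rw [key, bal_conv_even ε i j m hε i.isLt]
  rw [hM, Matrix.det_mul, Matrix.det_transpose]
  have hT : (Matrix.of (fun i k : Fin m => (bal (2*(i:ℕ)+ε) (2*(k:ℕ)+ε) : ℤ))).BlockTriangular OrderDual.toDual := by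
    intro i j hij
    have hij' : (i:ℕ) < (j:ℕ) := hij
    simp only [Matrix.of_apply]
    rw [bal_eq_zero_of_lt (2*(i:ℕ)+ε) (2*(j:ℕ)+ε) (by omega)]
    simp
  rw [Matrix.det_of_lowerTriangular _ hT]
  have hd : ∀ i : Fin m, (Matrix.of (fun i k : Fin m => (bal (2*(i:ℕ)+ε) (2*(k:ℕ)+ε) : ℤ))) i i = 1 := by
    intro i
    simp [bal_self]
  rw [Finset.prod_congr rfl (fun i _ => hd i)]
  simp


open Matrix Finset

section DJ
variable {k : ℕ}

lemma my_updateRow_comm (M : Matrix (Fin k) (Fin k) ℤ) {i j : Fin k} (hij : i ≠ j)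
    (u v : Fin k → ℤ) :
    (M.updateRow i u).updateRow j v = (M.updateRow j v).updateRow i u := by
  ext a b
  simp only [Matrix.updateRow_apply]
  rcases eq_or_ne a i with rfl | hai <;> rcases eq_or_ne a j with h | haj <;> simp_all

lemma my_updateColumn_comm (M : Matrix (Fin k) (Fin k) ℤ) {i j : Fin k} (hij : i ≠ j)
    (u v : Fin k → ℤ) :
    (M.updateCol i u).updateCol j v = (M.updateCol j v).updateCol i u := by
  ext a b
  simp only [Matrix.updateCol_apply]
  rcases eq_or_ne b i with rfl | hbi <;> rcases eq_or_ne b j with h | hbj <;> simp_all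

/-- expansion of a determinant along an updated row -/
lemma det_updateRow_expand (M : Matrix (Fin k) (Fin k) ℤ) (j : Fin k) (w : Fin k → ℤ) :
    (M.updateRow j w).det = ∑ b : Fin k, w b * (M.updateRow j (Pi.single b 1)).det := by
  have main : ∀ s : Finset (Fin k),
      (M.updateRow j (∑ b ∈ s, Pi.single b (w b))).det
        = ∑ b ∈ s, w b * (M.updateRow j (Pi.single b 1)).det := by
    intro s
    induction s using Finset.induction_on with
    | empty =>
      simp only [Finset.sum_empty]
      apply Matrix.det_eq_zero_of_row_eq_zero j
      intro jj
      simp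
    | insert b s' hb ih =>
      rw [Finset.sum_insert hb, Matrix.det_updateRow_add, ih, Finset.sum_insert hb]
      congr 1
      have : Pi.single b (w b) = w b • (Pi.single b 1 : Fin k → ℤ) := by
        ext x
        rcases eq_or_ne x b with rfl | hx
        · simp
        · simp [Pi.single_apply, hx]
      rw [this, Matrix.det_updateRow_smul]
  have hw : w = ∑ b : Fin k, Pi.single b (w b) := by
    ext x
    rw [Finset.sum_apply]
    simp [Pi.single_apply]
  conv_lhs => rw [hw]
  exact main Finset.univ

/-- determinant of the identity matrix with rows 0 and `last` replaced by basis vectors -/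
lemma det_one_double_single (m : ℕ) (a b : Fin (m+2)) :
    (((1 : Matrix (Fin (m+2)) (Fin (m+2)) ℤ).updateRow 0 (Pi.single a 1)).updateRow
        (Fin.last (m+1)) (Pi.single b 1)).det
      = (if a = 0 then 1 else 0) * (if b = Fin.last (m+1) then 1 else 0)
        - (if a = Fin.last (m+1) then 1 else 0) * (if b = 0 then 1 else 0) := by
  have h0last : (0 : Fin (m+2)) ≠ Fin.last (m+1) := by
    simp [Fin.ext_iff]
  set M := ((1 : Matrix (Fin (m+2)) (Fin (m+2)) ℤ).updateRow 0 (Pi.single a 1)).updateRow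
      (Fin.last (m+1)) (Pi.single b 1) with hM
  have row0 : M 0 = Pi.single a 1 := by
    rw [hM, Matrix.updateRow_ne h0last, Matrix.updateRow_self]
  have rowlast : M (Fin.last (m+1)) = Pi.single b 1 := by
    rw [hM, Matrix.updateRow_self]
  have rowsingle : ∀ c : Fin (m+2), c ≠ 0 → c ≠ Fin.last (m+1) → M c = Pi.single c 1 := by
    intro c hc0 hcl
    rw [hM, Matrix.updateRow_ne hcl, Matrix.updateRow_ne hc0]
    ext x
    simp [Matrix.one_apply, Pi.single_apply, eq_comm]
  by_cases ha0 : a = 0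
  · subst ha0
    by_cases hbl : b = Fin.last (m+1)
    · subst hbl
      have hone : M = 1 := by
        ext c x
        rcases eq_or_ne c 0 with rfl | hc0
        · rw [row0]; simp [Matrix.one_apply, Pi.single_apply, eq_comm]
        · rcases eq_or_ne c (Fin.last (m+1)) with rfl | hcl
          · rw [rowlast]; simp [Matrix.one_apply, Pi.single_apply, eq_comm]
          · rw [rowsingle c hc0 hcl]; simp [Matrix.one_apply, Pi.single_apply, eq_comm]
      rw [hone, Matrix.det_one]
      simp [h0last, Ne.symm h0last]
    · have hdet : M.det = 0 := by
        rcases eq_or_ne b 0 with rfl | hb0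
        · exact Matrix.det_zero_of_row_eq h0last (row0.trans rowlast.symm)
        · exact Matrix.det_zero_of_row_eq (Ne.symm hbl)
            (rowlast.trans (rowsingle b hb0 hbl).symm)
      rw [hdet]
      simp [hbl, h0last]
  · by_cases hal : a = Fin.last (m+1)
    · subst hal
      by_cases hb0 : b = 0
      · subst hb0
        have hswap : M = (1 : Matrix (Fin (m+2)) (Fin (m+2)) ℤ).submatrix
            (Equiv.swap 0 (Fin.last (m+1))) id := by
          ext c x
          rcases eq_or_ne c 0 with rfl | hc0
          · rw [Matrix.submatrix_apply, Equiv.swap_apply_left, id]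
            rw [congrFun row0 x]
            simp [Matrix.one_apply, Pi.single_apply, eq_comm]
          · rcases eq_or_ne c (Fin.last (m+1)) with rfl | hcl
            · rw [Matrix.submatrix_apply, Equiv.swap_apply_right, id]
              rw [congrFun rowlast x]
              simp [Matrix.one_apply, Pi.single_apply, eq_comm]
            · rw [Matrix.submatrix_apply, Equiv.swap_apply_of_ne_of_ne hc0 hcl, id]
              rw [congrFun (rowsingle c hc0 hcl) x]
              simp [Matrix.one_apply, Pi.single_apply, eq_comm]
        rw [hswap, Matrix.det_permute, Equiv.Perm.sign_swap h0last, Matrix.det_one]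
        simp [ha0, h0last, Ne.symm h0last]
      · have hdet : M.det = 0 := by
          rcases eq_or_ne b (Fin.last (m+1)) with rfl | hbl
          · exact Matrix.det_zero_of_row_eq h0last (row0.trans rowlast.symm)
          · exact Matrix.det_zero_of_row_eq (Ne.symm hbl)
              (rowlast.trans (rowsingle b hb0 hbl).symm)
        rw [hdet]
        simp [ha0, hb0]
    · have hdet : M.det = 0 := by
        exact Matrix.det_zero_of_row_eq (Ne.symm ha0 : (0:Fin (m+2)) ≠ a)
          (row0.trans (rowsingle a ha0 hal).symm)
      rw [hdet]
      simp [ha0, hal]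

lemma det_double_update (m : ℕ) (u v : Fin (m+2) → ℤ) :
    (((1 : Matrix (Fin (m+2)) (Fin (m+2)) ℤ).updateRow 0 u).updateRow (Fin.last (m+1)) v).det
      = u 0 * v (Fin.last (m+1)) - u (Fin.last (m+1)) * v 0 := by
  have h0last : (0 : Fin (m+2)) ≠ Fin.last (m+1) := by simp [Fin.ext_iff]
  rw [det_updateRow_expand]
  have inner : ∀ b : Fin (m+2),
      (((1 : Matrix (Fin (m+2)) (Fin (m+2)) ℤ).updateRow 0 u).updateRow (Fin.last (m+1))
        (Pi.single b 1)).det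
      = ∑ a : Fin (m+2), u a *
          ((if a = 0 then 1 else 0) * (if b = Fin.last (m+1) then 1 else 0)
            - (if a = Fin.last (m+1) then 1 else 0) * (if b = 0 then 1 else 0)) := by
    intro b
    rw [my_updateRow_comm _ h0last, det_updateRow_expand]
    apply Finset.sum_congr rfl
    intro a _
    rw [my_updateRow_comm _ (Ne.symm h0last), det_one_double_single]
  calc ∑ b : Fin (m+2), v b *
        (((1 : Matrix (Fin (m+2)) (Fin (m+2)) ℤ).updateRow 0 u).updateRow (Fin.last (m+1))
          (Pi.single b 1)).det
      = ∑ b : Fin (m+2), ∑ a : Fin (m+2), v b * (u a *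
          ((if a = 0 then 1 else 0) * (if b = Fin.last (m+1) then 1 else 0)
            - (if a = Fin.last (m+1) then 1 else 0) * (if b = 0 then 1 else 0))) := by
        apply Finset.sum_congr rfl
        intro b _
        rw [inner b, Finset.mul_sum]
    _ = u 0 * v (Fin.last (m+1)) - u (Fin.last (m+1)) * v 0 := by
        simp only [mul_sub, mul_ite, mul_one, mul_zero, ite_mul, zero_mul,
          Finset.sum_sub_distrib, Finset.sum_ite_eq', Finset.mem_univ, if_true]
        simp [h0last, Ne.symm h0last]
        ring

lemma det_updateRow_single (n : ℕ) (M : Matrix (Fin (n+1)) (Fin (n+1)) ℤ) (i j : Fin (n+1)) :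
    (M.updateRow j (Pi.single i 1)).det
      = (-1)^((i:ℕ)+(j:ℕ)) * (M.submatrix j.succAbove i.succAbove).det := by
  rw [Matrix.det_succ_row _ j]
  rw [Finset.sum_eq_single i]
  · have hentry : (M.updateRow j (Pi.single i 1)) j i = 1 := by
      rw [Matrix.updateRow_self, Pi.single_eq_same]
    have hsub : (M.updateRow j (Pi.single i 1)).submatrix j.succAbove i.succAbove
        = M.submatrix j.succAbove i.succAbove := by
      ext r c
      simp only [Matrix.submatrix_apply]
      rw [Matrix.updateRow_ne (Fin.succAbove_ne j r)]
    rw [hentry, hsub, mul_one, add_comm (j:ℕ) (i:ℕ)]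
  · intro c _ hc
    have : (M.updateRow j (Pi.single i 1)) j c = 0 := by
      rw [Matrix.updateRow_self, Pi.single_eq_of_ne hc]
    rw [this, mul_zero, zero_mul]
  · intro h
    exact absurd (Finset.mem_univ i) h

lemma det_updateColumn_single (n : ℕ) (M : Matrix (Fin (n+1)) (Fin (n+1)) ℤ) (i j : Fin (n+1)) :
    (M.updateCol j (Pi.single i 1)).det
      = (-1)^((i:ℕ)+(j:ℕ)) * (M.submatrix i.succAbove j.succAbove).det := by
  rw [← Matrix.det_transpose, ← Matrix.updateRow_transpose, det_updateRow_single,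
    ← Matrix.transpose_submatrix, Matrix.det_transpose]

lemma adjugate_entry (n : ℕ) (A : Matrix (Fin (n+1)) (Fin (n+1)) ℤ) (i j : Fin (n+1)) :
    A.adjugate i j = (-1)^((i:ℕ)+(j:ℕ)) * (A.submatrix j.succAbove i.succAbove).det := by
  rw [Matrix.adjugate_apply, det_updateRow_single, add_comm (i:ℕ) (j:ℕ)]

lemma my_mul_updateColumn (A M : Matrix (Fin k) (Fin k) ℤ) (j : Fin k) (v : Fin k → ℤ) :
    A * (M.updateCol j v) = (A * M).updateCol j (A.mulVec v) := by
  ext i c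
  by_cases hc : c = j
  · subst hc
    simp [Matrix.mul_apply, Matrix.updateCol_apply, Matrix.mulVec, dotProduct]
  · simp [Matrix.mul_apply, Matrix.updateCol_apply, hc]

lemma my_submatrix_updateColumn {l : ℕ} (M : Matrix (Fin k) (Fin k) ℤ)
    (f g : Fin l → Fin k) (c : Fin k) (c' : Fin l) (hg : ∀ j, g j = c ↔ j = c')
    (v : Fin k → ℤ) :
    (M.updateCol c v).submatrix f g = (M.submatrix f g).updateCol c' (fun i => v (f i)) := by
  ext i j
  simp only [Matrix.submatrix_apply, Matrix.updateCol_apply]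
  by_cases hj : j = c'
  · rw [if_pos ((hg j).mpr hj), if_pos hj]
  · rw [if_neg (fun h => hj ((hg j).mp h)), if_neg hj]

theorem dj_weak (m : ℕ) (A : Matrix (Fin (m+2)) (Fin (m+2)) ℤ) :
    A.det * ((A.submatrix Fin.succ Fin.succ).det * (A.submatrix Fin.castSucc Fin.castSucc).det
      - (A.submatrix Fin.succ Fin.castSucc).det * (A.submatrix Fin.castSucc Fin.succ).det)
    = A.det ^ 2 * (A.submatrix (fun i : Fin m => Fin.castSucc (Fin.succ i))
        (fun i : Fin m => Fin.castSucc (Fin.succ i))).det := by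
  set nn : Fin (m+2) := Fin.last (m+1) with hnn
  have h0n : (0 : Fin (m+2)) ≠ nn := by simp [hnn, Fin.ext_iff]
  set u : Fin (m+2) → ℤ := fun i => A.adjugate i 0 with hu
  set v : Fin (m+2) → ℤ := fun i => A.adjugate i nn with hv
  set C : Matrix (Fin (m+2)) (Fin (m+2)) ℤ :=
    ((1 : Matrix (Fin (m+2)) (Fin (m+2)) ℤ).updateCol 0 u).updateCol nn v with hC
  -- determinant of C
  have hdetC : C.det = u 0 * v nn - u nn * v 0 := by
    rw [← Matrix.det_transpose, hC]
    have : (((1 : Matrix (Fin (m+2)) (Fin (m+2)) ℤ).updateCol 0 u).updateCol nn v)ᵀ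
        = ((1 : Matrix (Fin (m+2)) (Fin (m+2)) ℤ).updateRow 0 u).updateRow nn v := by
      rw [← Matrix.updateRow_transpose, ← Matrix.updateRow_transpose, Matrix.transpose_one]
    rw [this, det_double_update]
  -- A * C
  have hAC : A * C = (A.updateCol 0 (A.det • Pi.single 0 1)).updateCol nn
      (A.det • Pi.single nn 1) := by
    rw [hC, my_mul_updateColumn, my_mul_updateColumn, Matrix.mul_one]
    have hmv : ∀ w : Fin (m+2), A.mulVec (fun i => A.adjugate i w) = A.det • Pi.single w 1 := by
      intro w
      funext i
      have : A.mulVec (fun i => A.adjugate i w) i = (A * A.adjugate) i w := by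
        simp [Matrix.mulVec, Matrix.mul_apply, dotProduct]
      rw [this, Matrix.mul_adjugate]
      simp [Matrix.one_apply, Pi.single_apply, Matrix.smul_apply]
    rw [hu, hv, hmv 0, hmv nn]
  -- determinant of A * C
  have hdetAC : (A * C).det = A.det ^ 2 *
      (A.submatrix (fun i : Fin m => Fin.castSucc (Fin.succ i))
        (fun i : Fin m => Fin.castSucc (Fin.succ i))).det := by
    rw [hAC, Matrix.det_updateCol_smul]
    rw [my_updateColumn_comm _ h0n, Matrix.det_updateCol_smul,
      my_updateColumn_comm _ (Ne.symm h0n)]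
    have hstep : ((A.updateCol 0 (Pi.single 0 1)).updateCol nn (Pi.single nn 1)).det
        = (A.submatrix (fun i : Fin m => Fin.castSucc (Fin.succ i))
            (fun i : Fin m => Fin.castSucc (Fin.succ i))).det := by
      rw [det_updateColumn_single]
      have hsign : ((-1 : ℤ))^((nn:ℕ)+(nn:ℕ)) = 1 := Even.neg_one_pow (Even.add_self _)
      rw [hsign, one_mul, hnn, Fin.succAbove_last]
      rw [my_submatrix_updateColumn A Fin.castSucc Fin.castSucc 0 0
        (fun j => Fin.castSucc_eq_zero_iff) (Pi.single 0 1)]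
      have hvec : (fun i : Fin (m+1) => (Pi.single (0 : Fin (m+2)) 1 : Fin (m+2) → ℤ) (Fin.castSucc i))
          = (Pi.single (0 : Fin (m+1)) 1 : Fin (m+1) → ℤ) := by
        funext i
        simp [Pi.single_apply]
      rw [hvec, det_updateColumn_single]
      simp only [Fin.val_zero, add_zero, pow_zero, one_mul, Fin.succAbove_zero]
      rw [Matrix.submatrix_submatrix]
      rfl
    rw [hstep]
    ring
  -- adjugate entries
  have hu0 : u 0 = (A.submatrix Fin.succ Fin.succ).det := by
    show A.adjugate 0 0 = _
    rw [adjugate_entry]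
    simp [Fin.succAbove_zero]
  have hvn : v nn = (A.submatrix Fin.castSucc Fin.castSucc).det := by
    show A.adjugate nn nn = _
    rw [adjugate_entry]
    have hsign : ((-1 : ℤ))^((nn:ℕ)+(nn:ℕ)) = 1 := Even.neg_one_pow (Even.add_self _)
    rw [hsign, one_mul, hnn, Fin.succAbove_last]
  have hun : u nn = (-1)^(m+1) * (A.submatrix Fin.succ Fin.castSucc).det := by
    show A.adjugate nn 0 = _
    rw [adjugate_entry]
    rw [hnn]
    simp [Fin.succAbove_zero, Fin.succAbove_last, Fin.val_last]
  have hv0 : v 0 = (-1)^(m+1) * (A.submatrix Fin.castSucc Fin.succ).det := by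
    show A.adjugate 0 nn = _
    rw [adjugate_entry]
    rw [hnn]
    simp [Fin.succAbove_zero, Fin.succAbove_last, Fin.val_last]
  have hmul : (A * C).det = A.det * C.det := Matrix.det_mul A C
  rw [hdetC, hu0, hvn, hun, hv0] at hmul
  rw [hdetAC] at hmul
  have hss : ((-1:ℤ)^(m+1)) * ((-1:ℤ)^(m+1)) = 1 := by
    rw [← pow_add]
    exact Even.neg_one_pow (Even.add_self _)
  have hsgn : (-1:ℤ)^(m+1) * (A.submatrix Fin.succ Fin.castSucc).det *
      ((-1:ℤ)^(m+1) * (A.submatrix Fin.castSucc Fin.succ).det)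
      = (A.submatrix Fin.succ Fin.castSucc).det * (A.submatrix Fin.castSucc Fin.succ).det := by
    calc (-1:ℤ)^(m+1) * (A.submatrix Fin.succ Fin.castSucc).det *
        ((-1:ℤ)^(m+1) * (A.submatrix Fin.castSucc Fin.succ).det)
        = ((-1:ℤ)^(m+1) * (-1:ℤ)^(m+1)) * ((A.submatrix Fin.succ Fin.castSucc).det *
            (A.submatrix Fin.castSucc Fin.succ).det) := by ring
      _ = _ := by rw [hss, one_mul]
  rw [hsgn] at hmul
  exact hmul.symm

end DJ


open Finset

/-- product of integers in `(a, b]` -/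
def Pr (a b : ℕ) : ℕ := ∏ t ∈ Finset.Ioc a b, t

/-- the double product `∏_{1≤i≤j≤k} (i+j+2m)` -/
def Qr (k m : ℕ) : ℕ := ∏ i ∈ Finset.Icc 1 k, ∏ j ∈ Finset.Icc i k, (i + j + 2*m)

lemma Pr_empty {a b : ℕ} (h : b ≤ a) : Pr a b = 1 := by
  rw [Pr, Finset.Ioc_eq_empty (by omega), Finset.prod_empty]

lemma Pr_pos (a b : ℕ) : 0 < Pr a b := by
  rw [Pr]
  apply Finset.prod_pos
  intro i hi
  simp only [Finset.mem_Ioc] at hi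
  omega

lemma Qr_pos (k m : ℕ) : 0 < Qr k m := by
  rw [Qr]
  apply Finset.prod_pos
  intro i hi
  apply Finset.prod_pos
  intro j hj
  simp only [Finset.mem_Icc] at hi hj
  omega

lemma Pr_succ_top {a b : ℕ} (h : a ≤ b) : Pr a (b+1) = Pr a b * (b+1) :=
  Finset.prod_Ioc_succ_top h _

lemma Pr_concat {a b c : ℕ} (hab : a ≤ b) (hbc : b ≤ c) : Pr a b * Pr b c = Pr a c :=
  Finset.prod_Ioc_consecutive _ hab hbc

lemma Pr_single (a : ℕ) : Pr a (a+1) = a + 1 := by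
  rw [Pr_succ_top le_rfl, Pr_empty le_rfl, one_mul]

lemma Pr_front {a b : ℕ} (h : a < b) : Pr a b = (a+1) * Pr (a+1) b := by
  rw [← Pr_concat (Nat.le_succ a) h, Pr_single]

@[simp] lemma Qr_zero (m : ℕ) : Qr 0 m = 1 := by
  rw [Qr, Finset.Icc_eq_empty (by omega), Finset.prod_empty]

lemma prod_Icc_add (a b c : ℕ) :
    (∏ i ∈ Finset.Icc a b, (i + c)) = ∏ t ∈ Finset.Icc (a+c) (b+c), t := by
  rw [← Finset.map_add_right_Icc, Finset.prod_map]
  rfl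

lemma Qr_succ (k m : ℕ) : Qr (k+1) m = Qr k m * Pr (k+1+2*m) (2*k+2+2*m) := by
  rw [Qr, Qr]
  rw [Finset.prod_Icc_succ_top (by omega : 1 ≤ k+1)]
  have inner : ∀ i, i ∈ Finset.Icc 1 k →
      (∏ j ∈ Finset.Icc i (k+1), (i + j + 2*m))
        = (∏ j ∈ Finset.Icc i k, (i + j + 2*m)) * (i + (k+1) + 2*m) := by
    intro i hi
    simp only [Finset.mem_Icc] at hi
    rw [Finset.prod_Icc_succ_top (by omega : i ≤ k+1)]
  rw [Finset.prod_congr rfl inner, Finset.prod_mul_distrib]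
  have last : (∏ j ∈ Finset.Icc (k+1) (k+1), (k+1+j+2*m)) = 2*k+2+2*m := by
    rw [Finset.Icc_self, Finset.prod_singleton]
    omega
  rw [last]
  have shift : (∏ i ∈ Finset.Icc 1 k, (i + (k+1) + 2*m)) = Pr (k+1+2*m) (2*k+1+2*m) := by
    have : ∀ i, i + (k+1) + 2*m = i + (k+1+2*m) := by intro i; omega
    rw [Finset.prod_congr rfl (fun i _ => this i), prod_Icc_add 1 k (k+1+2*m)]
    rw [Pr]
    congr 1
    rw [show 1 + (k+1+2*m) = (k+1+2*m)+1 by omega, show k + (k+1+2*m) = 2*k+1+2*m by omega,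
      Finset.Icc_add_one_left_eq_Ioc]
  rw [shift, mul_assoc]
  congr 1
  rw [show 2*k+2+2*m = (2*k+1+2*m)+1 by omega,
    Pr_succ_top (by omega : k+1+2*m ≤ 2*k+1+2*m)]

lemma Qr_up (r m : ℕ) : Qr r m = Qr (r-1) m * Pr (r+2*m) (2*r+2*m) := by
  cases r with
  | zero => simp [Pr_empty]
  | succ k =>
    rw [Qr_succ k m]
    congr 2 <;> omega

lemma Qr_shift : ∀ k m : ℕ, Qr k (m+1) * Pr (2*m+1) (2*m+2*k+2)
    = Qr k m * Pr (2*m+k+1) (2*m+2*k+2) * Pr (2*m+k+2) (2*m+2*k+2) := by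
  intro k
  induction k with
  | zero =>
    intro m
    simp only [Qr_zero, one_mul]
    rw [show 2*m+0+1 = 2*m+1 by omega, show 2*m+2*0+2 = (2*m+1)+1 by omega, Pr_single,
      Pr_empty (by omega), mul_one]
  | succ k IH =>
    intro m
    have E1 : Qr (k+1) (m+1) = Qr k (m+1) * Pr (2*m+k+3) (2*m+2*k+4) := by
      rw [Qr_succ]
      congr 2 <;> omega
    have E2 : Qr (k+1) m = Qr k m * Pr (2*m+k+1) (2*m+2*k+2) := by
      rw [Qr_succ]
      congr 2 <;> omega
    have S1 : Pr (2*m+1) (2*m+2*(k+1)+2) = Pr (2*m+1) (2*m+2*k+2) * ((2*m+2*k+3) * (2*m+2*k+4)) := by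
      rw [show 2*m+2*(k+1)+2 = (2*m+2*k+3)+1 by omega, Pr_succ_top (by omega),
        show 2*m+2*k+3 = (2*m+2*k+2)+1 by omega, Pr_succ_top (by omega)]
      ring
    have S2 : Pr (2*m+(k+1)+1) (2*m+2*(k+1)+2)
        = Pr (2*m+k+2) (2*m+2*k+2) * ((2*m+2*k+3) * (2*m+2*k+4)) := by
      rw [show 2*m+2*(k+1)+2 = (2*m+2*k+3)+1 by omega, Pr_succ_top (by omega),
        show 2*m+2*k+3 = (2*m+2*k+2)+1 by omega, Pr_succ_top (by omega),
        show 2*m+(k+1)+1 = 2*m+k+2 by omega]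
      ring
    have S3 : Pr (2*m+(k+1)+2) (2*m+2*(k+1)+2) = Pr (2*m+k+3) (2*m+2*k+4) := by
      congr 1 <;> omega
    rw [E1, E2, S1, S2, S3]
    calc Qr k (m+1) * Pr (2*m+k+3) (2*m+2*k+4) *
          (Pr (2*m+1) (2*m+2*k+2) * ((2*m+2*k+3) * (2*m+2*k+4)))
        = (Qr k (m+1) * Pr (2*m+1) (2*m+2*k+2)) *
            (Pr (2*m+k+3) (2*m+2*k+4) * ((2*m+2*k+3) * (2*m+2*k+4))) := by ring
      _ = (Qr k m * Pr (2*m+k+1) (2*m+2*k+2) * Pr (2*m+k+2) (2*m+2*k+2)) *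
            (Pr (2*m+k+3) (2*m+2*k+4) * ((2*m+2*k+3) * (2*m+2*k+4))) := by rw [IH]
      _ = Qr k m * Pr (2*m+k+1) (2*m+2*k+2) *
            (Pr (2*m+k+2) (2*m+2*k+2) * ((2*m+2*k+3) * (2*m+2*k+4))) *
            Pr (2*m+k+3) (2*m+2*k+4) := by ring

lemma Pr_pair (a : ℕ) : Pr a (a+2) = (a+1)*(a+2) := by
  have h := Pr_succ_top (show a ≤ a+1 by omega)
  rw [show a+2 = a+1+1 by omega, h, Pr_single]

lemma Pr_triple (a : ℕ) : Pr a (a+3) = (a+1)*(a+2)*(a+3) := by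
  have h := Pr_succ_top (show a ≤ a+2 by omega)
  rw [show a+3 = a+2+1 by omega, h, Pr_pair]

lemma Pr_quad (a : ℕ) : Pr a (a+4) = (a+1)*(a+2)*(a+3)*(a+4) := by
  have h := Pr_succ_top (show a ≤ a+3 by omega)
  rw [show a+4 = a+3+1 by omega, h, Pr_triple]

lemma cast_ne_zero_of_pos {n : ℕ} (h : 0 < n) : (n : ℚ) ≠ 0 := by
  exact_mod_cast h.ne'

set_option maxHeartbeats 3000000 in
lemma ide (s m : ℕ) :
    (Pr (2*m+s+1) (2*m+2*s+2) * Pr (2*m+s+2) (2*m+2*s+2)) * Pr (2*m+3) (2*m+2*s+4)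
      * Pr (2*m+s+3) (2*m+2*s+4) * Pr (2*m+s+4) (2*m+2*s+6) * (Pr (s+1) (2*s+2))^2
    = (Pr (2*m+s+3) (2*m+2*s+4) * Pr (2*m+s+4) (2*m+2*s+4)) * Pr (2*m+1) (2*m+2*s+2)
        * Pr (2*m+s+1) (2*m+2*s+2) * Pr (2*m+s+2) (2*m+2*s+4) * (Pr (s+1) (2*s+2))^2
      + (Pr (2*m+s+1) (2*m+2*s+2) * Pr (2*m+s+2) (2*m+2*s+2)) * Pr (2*m+3) (2*m+2*s+4)
        * (Pr (2*m+s+3) (2*m+2*s+4))^2 * (Pr (s+1) (2*s+2) * Pr (s+2) (2*s+4)) := by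
  have rA : (2*m+s+2)*(2*m+s+3) * Pr (2*m+s+3) (2*m+2*s+4)
      = Pr (2*m+s+1) (2*m+2*s+2) * ((2*m+2*s+3)*(2*m+2*s+4)) := by
    have c1 := Pr_concat (show 2*m+s+1 ≤ 2*m+s+3 by omega) (show 2*m+s+3 ≤ 2*m+2*s+4 by omega)
    have c2 := Pr_concat (show 2*m+s+1 ≤ 2*m+2*s+2 by omega) (show 2*m+2*s+2 ≤ 2*m+2*s+4 by omega)
    have p1 : Pr (2*m+s+1) (2*m+s+3) = (2*m+s+2)*(2*m+s+3) := by
      rw [show (2*m+s+3) = (2*m+s+1)+2 by omega, Pr_pair]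
    have p2 : Pr (2*m+2*s+2) (2*m+2*s+4) = (2*m+2*s+3)*(2*m+2*s+4) := by
      rw [show (2*m+2*s+4) = (2*m+2*s+2)+2 by omega, Pr_pair]
    calc (2*m+s+2)*(2*m+s+3) * Pr (2*m+s+3) (2*m+2*s+4)
        = Pr (2*m+s+1) (2*m+s+3) * Pr (2*m+s+3) (2*m+2*s+4) := by rw [p1]
      _ = Pr (2*m+s+1) (2*m+2*s+4) := c1
      _ = Pr (2*m+s+1) (2*m+2*s+2) * Pr (2*m+2*s+2) (2*m+2*s+4) := c2.symm
      _ = Pr (2*m+s+1) (2*m+2*s+2) * ((2*m+2*s+3)*(2*m+2*s+4)) := by rw [p2]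
  have rB : (2*m+s+2) * Pr (2*m+s+2) (2*m+2*s+4)
      = Pr (2*m+s+1) (2*m+2*s+2) * ((2*m+2*s+3)*(2*m+2*s+4)) := by
    have c1 := Pr_concat (show 2*m+s+1 ≤ 2*m+s+2 by omega) (show 2*m+s+2 ≤ 2*m+2*s+4 by omega)
    have c2 := Pr_concat (show 2*m+s+1 ≤ 2*m+2*s+2 by omega) (show 2*m+2*s+2 ≤ 2*m+2*s+4 by omega)
    have p1 : Pr (2*m+s+1) (2*m+s+2) = 2*m+s+2 := by
      rw [show (2*m+s+2) = (2*m+s+1)+1 by omega, Pr_single]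
    have p2 : Pr (2*m+2*s+2) (2*m+2*s+4) = (2*m+2*s+3)*(2*m+2*s+4) := by
      rw [show (2*m+2*s+4) = (2*m+2*s+2)+2 by omega, Pr_pair]
    calc (2*m+s+2) * Pr (2*m+s+2) (2*m+2*s+4)
        = Pr (2*m+s+1) (2*m+s+2) * Pr (2*m+s+2) (2*m+2*s+4) := by rw [p1]
      _ = Pr (2*m+s+1) (2*m+2*s+4) := c1
      _ = Pr (2*m+s+1) (2*m+2*s+2) * Pr (2*m+2*s+2) (2*m+2*s+4) := c2.symm
      _ = Pr (2*m+s+1) (2*m+2*s+2) * ((2*m+2*s+3)*(2*m+2*s+4)) := by rw [p2]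
  have rC : (2*m+s+2)*(2*m+s+3)*(2*m+s+4) * Pr (2*m+s+4) (2*m+2*s+6)
      = Pr (2*m+s+1) (2*m+2*s+2) * ((2*m+2*s+3)*(2*m+2*s+4)*(2*m+2*s+5)*(2*m+2*s+6)) := by
    have c1 := Pr_concat (show 2*m+s+1 ≤ 2*m+s+4 by omega) (show 2*m+s+4 ≤ 2*m+2*s+6 by omega)
    have c2 := Pr_concat (show 2*m+s+1 ≤ 2*m+2*s+2 by omega) (show 2*m+2*s+2 ≤ 2*m+2*s+6 by omega)
    have p1 : Pr (2*m+s+1) (2*m+s+4) = (2*m+s+2)*(2*m+s+3)*(2*m+s+4) := by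
      rw [show (2*m+s+4) = (2*m+s+1)+3 by omega, Pr_triple]
    have p2 : Pr (2*m+2*s+2) (2*m+2*s+6) = (2*m+2*s+3)*(2*m+2*s+4)*(2*m+2*s+5)*(2*m+2*s+6) := by
      rw [show (2*m+2*s+6) = (2*m+2*s+2)+4 by omega, Pr_quad]
    calc (2*m+s+2)*(2*m+s+3)*(2*m+s+4) * Pr (2*m+s+4) (2*m+2*s+6)
        = Pr (2*m+s+1) (2*m+s+4) * Pr (2*m+s+4) (2*m+2*s+6) := by rw [p1]
      _ = Pr (2*m+s+1) (2*m+2*s+6) := c1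
      _ = Pr (2*m+s+1) (2*m+2*s+2) * Pr (2*m+2*s+2) (2*m+2*s+6) := c2.symm
      _ = Pr (2*m+s+1) (2*m+2*s+2) * ((2*m+2*s+3)*(2*m+2*s+4)*(2*m+2*s+5)*(2*m+2*s+6)) := by rw [p2]
  have rG : (2*m+s+2)*(2*m+s+3)*(2*m+s+4) * Pr (2*m+s+4) (2*m+2*s+4)
      = Pr (2*m+s+1) (2*m+2*s+2) * ((2*m+2*s+3)*(2*m+2*s+4)) := by
    have c1 := Pr_concat (show 2*m+s+1 ≤ 2*m+s+4 by omega) (show 2*m+s+4 ≤ 2*m+2*s+4 by omega)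
    have c2 := Pr_concat (show 2*m+s+1 ≤ 2*m+2*s+2 by omega) (show 2*m+2*s+2 ≤ 2*m+2*s+4 by omega)
    have p1 : Pr (2*m+s+1) (2*m+s+4) = (2*m+s+2)*(2*m+s+3)*(2*m+s+4) := by
      rw [show (2*m+s+4) = (2*m+s+1)+3 by omega, Pr_triple]
    have p2 : Pr (2*m+2*s+2) (2*m+2*s+4) = (2*m+2*s+3)*(2*m+2*s+4) := by
      rw [show (2*m+2*s+4) = (2*m+2*s+2)+2 by omega, Pr_pair]
    calc (2*m+s+2)*(2*m+s+3)*(2*m+s+4) * Pr (2*m+s+4) (2*m+2*s+4)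
        = Pr (2*m+s+1) (2*m+s+4) * Pr (2*m+s+4) (2*m+2*s+4) := by rw [p1]
      _ = Pr (2*m+s+1) (2*m+2*s+4) := c1
      _ = Pr (2*m+s+1) (2*m+2*s+2) * Pr (2*m+2*s+2) (2*m+2*s+4) := c2.symm
      _ = Pr (2*m+s+1) (2*m+2*s+2) * ((2*m+2*s+3)*(2*m+2*s+4)) := by rw [p2]
  have rE : (2*m+2)*(2*m+3) * Pr (2*m+3) (2*m+s+3)
      = Pr (2*m+1) (2*m+s+1) * ((2*m+s+2)*(2*m+s+3)) := by
    have c1 := Pr_concat (show 2*m+1 ≤ 2*m+3 by omega) (show 2*m+3 ≤ 2*m+s+3 by omega)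
    have c2 := Pr_concat (show 2*m+1 ≤ 2*m+s+1 by omega) (show 2*m+s+1 ≤ 2*m+s+3 by omega)
    have p1 : Pr (2*m+1) (2*m+3) = (2*m+2)*(2*m+3) := by
      rw [show (2*m+3) = (2*m+1)+2 by omega, Pr_pair]
    have p2 : Pr (2*m+s+1) (2*m+s+3) = (2*m+s+2)*(2*m+s+3) := by
      rw [show (2*m+s+3) = (2*m+s+1)+2 by omega, Pr_pair]
    calc (2*m+2)*(2*m+3) * Pr (2*m+3) (2*m+s+3)
        = Pr (2*m+1) (2*m+3) * Pr (2*m+3) (2*m+s+3) := by rw [p1]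
      _ = Pr (2*m+1) (2*m+s+3) := c1
      _ = Pr (2*m+1) (2*m+s+1) * Pr (2*m+s+1) (2*m+s+3) := c2.symm
      _ = Pr (2*m+1) (2*m+s+1) * ((2*m+s+2)*(2*m+s+3)) := by rw [p2]
  have rH : (s+2) * Pr (s+2) (2*s+4)
      = Pr (s+1) (2*s+2) * ((2*s+3)*(2*s+4)) := by
    have c1 := Pr_concat (show s+1 ≤ s+2 by omega) (show s+2 ≤ 2*s+4 by omega)
    have c2 := Pr_concat (show s+1 ≤ 2*s+2 by omega) (show 2*s+2 ≤ 2*s+4 by omega)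
    have p1 : Pr (s+1) (s+2) = s+2 := by
      rw [show (s+2) = (s+1)+1 by omega, Pr_single]
    have p2 : Pr (2*s+2) (2*s+4) = (2*s+3)*(2*s+4) := by
      rw [show (2*s+4) = (2*s+2)+2 by omega, Pr_pair]
    calc (s+2) * Pr (s+2) (2*s+4)
        = Pr (s+1) (s+2) * Pr (s+2) (2*s+4) := by rw [p1]
      _ = Pr (s+1) (2*s+4) := c1
      _ = Pr (s+1) (2*s+2) * Pr (2*s+2) (2*s+4) := c2.symm
      _ = Pr (s+1) (2*s+2) * ((2*s+3)*(2*s+4)) := by rw [p2]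
  have rD : Pr (2*m+1) (2*m+2*s+2) = Pr (2*m+1) (2*m+s+1) * Pr (2*m+s+1) (2*m+2*s+2) :=
    (Pr_concat (show 2*m+1 ≤ 2*m+s+1 by omega) (show 2*m+s+1 ≤ 2*m+2*s+2 by omega)).symm
  have rE2 : Pr (2*m+3) (2*m+2*s+4) = Pr (2*m+3) (2*m+s+3) * Pr (2*m+s+3) (2*m+2*s+4) :=
    (Pr_concat (show 2*m+3 ≤ 2*m+s+3 by omega) (show 2*m+s+3 ≤ 2*m+2*s+4 by omega)).symm
  have rF : (2*m+s+2) * Pr (2*m+s+2) (2*m+2*s+2) = Pr (2*m+s+1) (2*m+2*s+2) := by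
    have c1 := Pr_concat (show 2*m+s+1 ≤ 2*m+s+2 by omega) (show 2*m+s+2 ≤ 2*m+2*s+2 by omega)
    have p1 : Pr (2*m+s+1) (2*m+s+2) = 2*m+s+2 := by
      rw [show 2*m+s+2 = 2*m+s+1+1 by omega, Pr_single]
    calc (2*m+s+2) * Pr (2*m+s+2) (2*m+2*s+2)
        = Pr (2*m+s+1) (2*m+s+2) * Pr (2*m+s+2) (2*m+2*s+2) := by rw [p1]
      _ = Pr (2*m+s+1) (2*m+2*s+2) := c1
  -- clear denominators: multiply by W and reduce to a polynomial identity
  apply Nat.eq_of_mul_eq_mul_right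
    (show 0 < (2*m+s+2)^4 * (2*m+s+3)^3 * (2*m+s+4) * ((2*m+2)*(2*m+3)) * (s+2) by positivity)
  have hL : (Pr (2*m+s+1) (2*m+2*s+2) * Pr (2*m+s+2) (2*m+2*s+2)) * Pr (2*m+3) (2*m+2*s+4)
        * Pr (2*m+s+3) (2*m+2*s+4) * Pr (2*m+s+4) (2*m+2*s+6) * (Pr (s+1) (2*s+2))^2
        * ((2*m+s+2)^4 * (2*m+s+3)^3 * (2*m+s+4) * ((2*m+2)*(2*m+3)) * (s+2))
      = Pr (2*m+s+1) (2*m+2*s+2)^5 * Pr (2*m+1) (2*m+s+1) * (Pr (s+1) (2*s+2))^2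
          * ((2*m+2*s+3)*(2*m+2*s+4))^3 * ((2*m+2*s+5)*(2*m+2*s+6))
          * ((2*m+s+2)*(2*m+s+3)*(s+2)) := by
    rw [rE2]
    calc (Pr (2*m+s+1) (2*m+2*s+2) * Pr (2*m+s+2) (2*m+2*s+2))
          * (Pr (2*m+3) (2*m+s+3) * Pr (2*m+s+3) (2*m+2*s+4))
          * Pr (2*m+s+3) (2*m+2*s+4) * Pr (2*m+s+4) (2*m+2*s+6) * (Pr (s+1) (2*s+2))^2
          * ((2*m+s+2)^4 * (2*m+s+3)^3 * (2*m+s+4) * ((2*m+2)*(2*m+3)) * (s+2))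
        = Pr (2*m+s+1) (2*m+2*s+2)
            * ((2*m+s+2) * Pr (2*m+s+2) (2*m+2*s+2))
            * ((2*m+2)*(2*m+3) * Pr (2*m+3) (2*m+s+3))
            * ((2*m+s+2)*(2*m+s+3) * Pr (2*m+s+3) (2*m+2*s+4))
            * ((2*m+s+2)*(2*m+s+3) * Pr (2*m+s+3) (2*m+2*s+4))
            * ((2*m+s+2)*(2*m+s+3)*(2*m+s+4) * Pr (2*m+s+4) (2*m+2*s+6))
            * (Pr (s+1) (2*s+2))^2 * (s+2) := by ring
      _ = _ := by
        rw [rF, rE, rA, rC]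
        ring
  have hR1 : (Pr (2*m+s+3) (2*m+2*s+4) * Pr (2*m+s+4) (2*m+2*s+4)) * Pr (2*m+1) (2*m+2*s+2)
        * Pr (2*m+s+1) (2*m+2*s+2) * Pr (2*m+s+2) (2*m+2*s+4) * (Pr (s+1) (2*s+2))^2
        * ((2*m+s+2)^4 * (2*m+s+3)^3 * (2*m+s+4) * ((2*m+2)*(2*m+3)) * (s+2))
      = Pr (2*m+s+1) (2*m+2*s+2)^5 * Pr (2*m+1) (2*m+s+1) * (Pr (s+1) (2*s+2))^2
          * ((2*m+2*s+3)*(2*m+2*s+4))^3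
          * ((2*m+s+2)*(2*m+s+3)*((2*m+2)*(2*m+3))*(s+2)) := by
    rw [rD]
    calc (Pr (2*m+s+3) (2*m+2*s+4) * Pr (2*m+s+4) (2*m+2*s+4))
          * (Pr (2*m+1) (2*m+s+1) * Pr (2*m+s+1) (2*m+2*s+2))
          * Pr (2*m+s+1) (2*m+2*s+2) * Pr (2*m+s+2) (2*m+2*s+4) * (Pr (s+1) (2*s+2))^2
          * ((2*m+s+2)^4 * (2*m+s+3)^3 * (2*m+s+4) * ((2*m+2)*(2*m+3)) * (s+2))
        = Pr (2*m+1) (2*m+s+1) * Pr (2*m+s+1) (2*m+2*s+2) * Pr (2*m+s+1) (2*m+2*s+2)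
            * ((2*m+s+2)*(2*m+s+3) * Pr (2*m+s+3) (2*m+2*s+4))
            * ((2*m+s+2)*(2*m+s+3)*(2*m+s+4) * Pr (2*m+s+4) (2*m+2*s+4))
            * ((2*m+s+2) * Pr (2*m+s+2) (2*m+2*s+4))
            * (Pr (s+1) (2*s+2))^2 * ((2*m+s+2)*(2*m+s+3)*((2*m+2)*(2*m+3))*(s+2)) := by ring
      _ = _ := by
        rw [rA, rG, rB]
        ring
  have hR2 : (Pr (2*m+s+1) (2*m+2*s+2) * Pr (2*m+s+2) (2*m+2*s+2)) * Pr (2*m+3) (2*m+2*s+4)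
        * (Pr (2*m+s+3) (2*m+2*s+4))^2 * (Pr (s+1) (2*s+2) * Pr (s+2) (2*s+4))
        * ((2*m+s+2)^4 * (2*m+s+3)^3 * (2*m+s+4) * ((2*m+2)*(2*m+3)) * (s+2))
      = Pr (2*m+s+1) (2*m+2*s+2)^5 * Pr (2*m+1) (2*m+s+1) * (Pr (s+1) (2*s+2))^2
          * ((2*m+2*s+3)*(2*m+2*s+4))^3 * ((2*s+3)*(2*s+4))
          * ((2*m+s+2)*(2*m+s+3)*(2*m+s+4)) := by
    rw [rE2]
    calc (Pr (2*m+s+1) (2*m+2*s+2) * Pr (2*m+s+2) (2*m+2*s+2))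
          * (Pr (2*m+3) (2*m+s+3) * Pr (2*m+s+3) (2*m+2*s+4))
          * (Pr (2*m+s+3) (2*m+2*s+4))^2 * (Pr (s+1) (2*s+2) * Pr (s+2) (2*s+4))
          * ((2*m+s+2)^4 * (2*m+s+3)^3 * (2*m+s+4) * ((2*m+2)*(2*m+3)) * (s+2))
        = Pr (2*m+s+1) (2*m+2*s+2)
            * ((2*m+s+2) * Pr (2*m+s+2) (2*m+2*s+2))
            * ((2*m+2)*(2*m+3) * Pr (2*m+3) (2*m+s+3))
            * ((2*m+s+2)*(2*m+s+3) * Pr (2*m+s+3) (2*m+2*s+4))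
            * ((2*m+s+2)*(2*m+s+3) * Pr (2*m+s+3) (2*m+2*s+4))
            * ((2*m+s+2)*(2*m+s+3) * Pr (2*m+s+3) (2*m+2*s+4))
            * Pr (s+1) (2*s+2) * ((s+2) * Pr (s+2) (2*s+4))
            * (2*m+s+4) := by ring
      _ = _ := by
        rw [rF, rE, rA, rH]
        ring
  calc (Pr (2*m+s+1) (2*m+2*s+2) * Pr (2*m+s+2) (2*m+2*s+2)) * Pr (2*m+3) (2*m+2*s+4)
        * Pr (2*m+s+3) (2*m+2*s+4) * Pr (2*m+s+4) (2*m+2*s+6) * (Pr (s+1) (2*s+2))^2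
        * ((2*m+s+2)^4 * (2*m+s+3)^3 * (2*m+s+4) * ((2*m+2)*(2*m+3)) * (s+2))
      = Pr (2*m+s+1) (2*m+2*s+2)^5 * Pr (2*m+1) (2*m+s+1) * (Pr (s+1) (2*s+2))^2
          * ((2*m+2*s+3)*(2*m+2*s+4))^3 * ((2*m+2*s+5)*(2*m+2*s+6))
          * ((2*m+s+2)*(2*m+s+3)*(s+2)) := hL
    _ = Pr (2*m+s+1) (2*m+2*s+2)^5 * Pr (2*m+1) (2*m+s+1) * (Pr (s+1) (2*s+2))^2
          * ((2*m+2*s+3)*(2*m+2*s+4))^3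
          * ((2*m+s+2)*(2*m+s+3)*((2*m+2)*(2*m+3))*(s+2))
        + Pr (2*m+s+1) (2*m+2*s+2)^5 * Pr (2*m+1) (2*m+s+1) * (Pr (s+1) (2*s+2))^2
          * ((2*m+2*s+3)*(2*m+2*s+4))^3 * ((2*s+3)*(2*s+4))
          * ((2*m+s+2)*(2*m+s+3)*(2*m+s+4)) := by ring
    _ = (Pr (2*m+s+3) (2*m+2*s+4) * Pr (2*m+s+4) (2*m+2*s+4)) * Pr (2*m+1) (2*m+2*s+2)
          * Pr (2*m+s+1) (2*m+2*s+2) * Pr (2*m+s+2) (2*m+2*s+4) * (Pr (s+1) (2*s+2))^2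
          * ((2*m+s+2)^4 * (2*m+s+3)^3 * (2*m+s+4) * ((2*m+2)*(2*m+3)) * (s+2))
        + (Pr (2*m+s+1) (2*m+2*s+2) * Pr (2*m+s+2) (2*m+2*s+2)) * Pr (2*m+3) (2*m+2*s+4)
          * (Pr (2*m+s+3) (2*m+2*s+4))^2 * (Pr (s+1) (2*s+2) * Pr (s+2) (2*s+4))
          * ((2*m+s+2)^4 * (2*m+s+3)^3 * (2*m+s+4) * ((2*m+2)*(2*m+3)) * (s+2)) := by
        rw [hR1, hR2]
    _ = _ := by ring

lemma starQ (r m : ℕ) :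
    Qr (r+1) (m+1) * Qr (r-1) (m+1) * (Qr r 0)^2
      = Qr (r-1) (m+2) * Qr (r+1) m * (Qr r 0)^2
        + (Qr r (m+1))^2 * (Qr (r-1) 0 * Qr (r+1) 0) := by
  cases r with
  | zero =>
    have q1 : ∀ x, Qr 1 x = 2+2*x := by
      intro x
      have h := Qr_succ 0 x
      rw [Qr_zero, one_mul, show 0+1+2*x = 1+2*x by omega,
        show 2*0+2+2*x = (1+2*x)+1 by omega, Pr_single] at h
      rw [h]
      omega
    simp only [show (0:ℕ)-1 = 0 from rfl, show (0:ℕ)+1 = 1 from rfl, Qr_zero, q1]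
    ring_nf
  | succ s =>
    simp only [show s+1+1 = s+2 from rfl, show s+1-1 = s from rfl]
    have e1 : Qr (s+1) (m+1) = Qr s (m+1) * Pr (2*m+s+3) (2*m+2*s+4) := by
      have h := Qr_succ s (m+1)
      rw [show s+1+2*(m+1) = 2*m+s+3 by omega, show 2*s+2+2*(m+1) = 2*m+2*s+4 by omega] at h
      exact h
    have e2 : Qr (s+2) (m+1) = Qr s (m+1) * Pr (2*m+s+3) (2*m+2*s+4) * Pr (2*m+s+4) (2*m+2*s+6) := by
      have h := Qr_succ (s+1) (m+1)
      rw [show s+1+1+2*(m+1) = 2*m+s+4 by omega, show 2*(s+1)+2+2*(m+1) = 2*m+2*s+6 by omega] at h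
      rw [show s+1+1 = s+2 from rfl] at h
      rw [h, e1]
    have e3 : Qr (s+1) m = Qr s m * Pr (2*m+s+1) (2*m+2*s+2) := by
      have h := Qr_succ s m
      rw [show s+1+2*m = 2*m+s+1 by omega, show 2*s+2+2*m = 2*m+2*s+2 by omega] at h
      exact h
    have e4 : Qr (s+2) m = Qr s m * Pr (2*m+s+1) (2*m+2*s+2) * Pr (2*m+s+2) (2*m+2*s+4) := by
      have h := Qr_succ (s+1) m
      rw [show s+1+1+2*m = 2*m+s+2 by omega, show 2*(s+1)+2+2*m = 2*m+2*s+4 by omega] at h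
      rw [show s+1+1 = s+2 from rfl] at h
      rw [h, e3]
    have e5 : Qr (s+1) 0 = Qr s 0 * Pr (s+1) (2*s+2) := by
      have h := Qr_succ s 0
      rw [show s+1+2*0 = s+1 by omega, show 2*s+2+2*0 = 2*s+2 by omega] at h
      exact h
    have e6 : Qr (s+2) 0 = Qr s 0 * Pr (s+1) (2*s+2) * Pr (s+2) (2*s+4) := by
      have h := Qr_succ (s+1) 0
      rw [show s+1+1+2*0 = s+2 by omega, show 2*(s+1)+2+2*0 = 2*s+4 by omega] at h
      rw [show s+1+1 = s+2 from rfl] at h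
      rw [h, e5]
    have sh1 : Qr s (m+1) * Pr (2*m+1) (2*m+2*s+2)
        = Qr s m * Pr (2*m+s+1) (2*m+2*s+2) * Pr (2*m+s+2) (2*m+2*s+2) := Qr_shift s m
    have sh2 : Qr s (m+2) * Pr (2*m+3) (2*m+2*s+4)
        = Qr s (m+1) * Pr (2*m+s+3) (2*m+2*s+4) * Pr (2*m+s+4) (2*m+2*s+4) := by
      have h := Qr_shift s (m+1)
      rw [show 2*(m+1)+1 = 2*m+3 by omega, show 2*(m+1)+2*s+2 = 2*m+2*s+4 by omega,
        show 2*(m+1)+s+1 = 2*m+s+3 by omega, show 2*(m+1)+s+2 = 2*m+s+4 by omega,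
        show m+1+1 = m+2 from rfl] at h
      exact h
    apply Nat.eq_of_mul_eq_mul_right (show 0 < Pr (2*m+1) (2*m+2*s+2) * Pr (2*m+1) (2*m+2*s+2)
      * Pr (2*m+3) (2*m+2*s+4) from by
        exact Nat.mul_pos (Nat.mul_pos (Pr_pos _ _) (Pr_pos _ _)) (Pr_pos _ _))
    rw [e2, e1, e4, e6, e5]
    have hLside : Qr s (m+1) * Pr (2*m+s+3) (2*m+2*s+4) * Pr (2*m+s+4) (2*m+2*s+6)
          * Qr s (m+1) * (Qr s 0 * Pr (s+1) (2*s+2))^2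
          * (Pr (2*m+1) (2*m+2*s+2) * Pr (2*m+1) (2*m+2*s+2) * Pr (2*m+3) (2*m+2*s+4))
        = (Qr s m)^2 * (Qr s 0)^2 * Pr (2*m+s+1) (2*m+2*s+2) * Pr (2*m+s+2) (2*m+2*s+2)
          * ((Pr (2*m+s+1) (2*m+2*s+2) * Pr (2*m+s+2) (2*m+2*s+2)) * Pr (2*m+3) (2*m+2*s+4)
            * Pr (2*m+s+3) (2*m+2*s+4) * Pr (2*m+s+4) (2*m+2*s+6) * (Pr (s+1) (2*s+2))^2) := by
      calc Qr s (m+1) * Pr (2*m+s+3) (2*m+2*s+4) * Pr (2*m+s+4) (2*m+2*s+6)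
          * Qr s (m+1) * (Qr s 0 * Pr (s+1) (2*s+2))^2
          * (Pr (2*m+1) (2*m+2*s+2) * Pr (2*m+1) (2*m+2*s+2) * Pr (2*m+3) (2*m+2*s+4))
          = (Qr s (m+1) * Pr (2*m+1) (2*m+2*s+2)) * (Qr s (m+1) * Pr (2*m+1) (2*m+2*s+2))
            * Pr (2*m+3) (2*m+2*s+4) * Pr (2*m+s+3) (2*m+2*s+4) * Pr (2*m+s+4) (2*m+2*s+6)
            * (Qr s 0)^2 * (Pr (s+1) (2*s+2))^2 := by ring
        _ = (Qr s m * Pr (2*m+s+1) (2*m+2*s+2) * Pr (2*m+s+2) (2*m+2*s+2))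
            * (Qr s m * Pr (2*m+s+1) (2*m+2*s+2) * Pr (2*m+s+2) (2*m+2*s+2))
            * Pr (2*m+3) (2*m+2*s+4) * Pr (2*m+s+3) (2*m+2*s+4) * Pr (2*m+s+4) (2*m+2*s+6)
            * (Qr s 0)^2 * (Pr (s+1) (2*s+2))^2 := by rw [sh1]
        _ = _ := by ring
    have hR1side : Qr s (m+2) * (Qr s m * Pr (2*m+s+1) (2*m+2*s+2) * Pr (2*m+s+2) (2*m+2*s+4))
          * (Qr s 0 * Pr (s+1) (2*s+2))^2
          * (Pr (2*m+1) (2*m+2*s+2) * Pr (2*m+1) (2*m+2*s+2) * Pr (2*m+3) (2*m+2*s+4))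
        = (Qr s m)^2 * (Qr s 0)^2 * Pr (2*m+s+1) (2*m+2*s+2) * Pr (2*m+s+2) (2*m+2*s+2)
          * ((Pr (2*m+s+3) (2*m+2*s+4) * Pr (2*m+s+4) (2*m+2*s+4)) * Pr (2*m+1) (2*m+2*s+2)
            * Pr (2*m+s+1) (2*m+2*s+2) * Pr (2*m+s+2) (2*m+2*s+4) * (Pr (s+1) (2*s+2))^2) := by
      calc Qr s (m+2) * (Qr s m * Pr (2*m+s+1) (2*m+2*s+2) * Pr (2*m+s+2) (2*m+2*s+4))
          * (Qr s 0 * Pr (s+1) (2*s+2))^2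
          * (Pr (2*m+1) (2*m+2*s+2) * Pr (2*m+1) (2*m+2*s+2) * Pr (2*m+3) (2*m+2*s+4))
          = (Qr s (m+2) * Pr (2*m+3) (2*m+2*s+4))
            * (Qr s m * Pr (2*m+s+1) (2*m+2*s+2) * Pr (2*m+s+2) (2*m+2*s+4))
            * (Qr s 0)^2 * (Pr (s+1) (2*s+2))^2
            * Pr (2*m+1) (2*m+2*s+2) * Pr (2*m+1) (2*m+2*s+2) := by ring
        _ = (Qr s (m+1) * Pr (2*m+s+3) (2*m+2*s+4) * Pr (2*m+s+4) (2*m+2*s+4))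
            * (Qr s m * Pr (2*m+s+1) (2*m+2*s+2) * Pr (2*m+s+2) (2*m+2*s+4))
            * (Qr s 0)^2 * (Pr (s+1) (2*s+2))^2
            * Pr (2*m+1) (2*m+2*s+2) * Pr (2*m+1) (2*m+2*s+2) := by rw [sh2]
        _ = (Qr s (m+1) * Pr (2*m+1) (2*m+2*s+2))
            * Pr (2*m+s+3) (2*m+2*s+4) * Pr (2*m+s+4) (2*m+2*s+4)
            * (Qr s m * Pr (2*m+s+1) (2*m+2*s+2) * Pr (2*m+s+2) (2*m+2*s+4))
            * (Qr s 0)^2 * (Pr (s+1) (2*s+2))^2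
            * Pr (2*m+1) (2*m+2*s+2) := by ring
        _ = (Qr s m * Pr (2*m+s+1) (2*m+2*s+2) * Pr (2*m+s+2) (2*m+2*s+2))
            * Pr (2*m+s+3) (2*m+2*s+4) * Pr (2*m+s+4) (2*m+2*s+4)
            * (Qr s m * Pr (2*m+s+1) (2*m+2*s+2) * Pr (2*m+s+2) (2*m+2*s+4))
            * (Qr s 0)^2 * (Pr (s+1) (2*s+2))^2
            * Pr (2*m+1) (2*m+2*s+2) := by rw [sh1]
        _ = _ := by ring
    have hR2side : (Qr s (m+1) * Pr (2*m+s+3) (2*m+2*s+4))^2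
          * (Qr s 0 * (Qr s 0 * Pr (s+1) (2*s+2) * Pr (s+2) (2*s+4)))
          * (Pr (2*m+1) (2*m+2*s+2) * Pr (2*m+1) (2*m+2*s+2) * Pr (2*m+3) (2*m+2*s+4))
        = (Qr s m)^2 * (Qr s 0)^2 * Pr (2*m+s+1) (2*m+2*s+2) * Pr (2*m+s+2) (2*m+2*s+2)
          * ((Pr (2*m+s+1) (2*m+2*s+2) * Pr (2*m+s+2) (2*m+2*s+2)) * Pr (2*m+3) (2*m+2*s+4)
            * (Pr (2*m+s+3) (2*m+2*s+4))^2 * (Pr (s+1) (2*s+2) * Pr (s+2) (2*s+4))) := by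
      calc (Qr s (m+1) * Pr (2*m+s+3) (2*m+2*s+4))^2
          * (Qr s 0 * (Qr s 0 * Pr (s+1) (2*s+2) * Pr (s+2) (2*s+4)))
          * (Pr (2*m+1) (2*m+2*s+2) * Pr (2*m+1) (2*m+2*s+2) * Pr (2*m+3) (2*m+2*s+4))
          = (Qr s (m+1) * Pr (2*m+1) (2*m+2*s+2)) * (Qr s (m+1) * Pr (2*m+1) (2*m+2*s+2))
            * (Pr (2*m+s+3) (2*m+2*s+4))^2 * (Qr s 0)^2
            * (Pr (s+1) (2*s+2) * Pr (s+2) (2*s+4)) * Pr (2*m+3) (2*m+2*s+4) := by ring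
        _ = (Qr s m * Pr (2*m+s+1) (2*m+2*s+2) * Pr (2*m+s+2) (2*m+2*s+2))
            * (Qr s m * Pr (2*m+s+1) (2*m+2*s+2) * Pr (2*m+s+2) (2*m+2*s+2))
            * (Pr (2*m+s+3) (2*m+2*s+4))^2 * (Qr s 0)^2
            * (Pr (s+1) (2*s+2) * Pr (s+2) (2*s+4)) * Pr (2*m+3) (2*m+2*s+4) := by rw [sh1]
        _ = _ := by ring
    rw [add_mul, hLside, hR1side, hR2side, ide s m]
    ring

/-- the Hankel determinant of Catalan numbers with shift `r` and size `m` -/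
def Hdet (r m : ℕ) : ℤ :=
  Matrix.det (Matrix.of fun i j : Fin m => (catalan (r + ↑i + ↑j) : ℤ))

lemma Hdet_size_zero (r : ℕ) : Hdet r 0 = 1 := Matrix.det_fin_zero

lemma Hdet_zero (m : ℕ) : Hdet 0 m = 1 := by
  rw [Hdet]
  have : (Matrix.of fun i j : Fin m => (catalan (0 + ↑i + ↑j) : ℤ))
      = (Matrix.of fun i j : Fin m => (catalan (↑i + ↑j + 0) : ℤ)) := by
    ext i j
    simp only [Matrix.of_apply]
    congr 2
    omega
  rw [this, det_hankel_base 0 m (by omega)]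

lemma Hdet_one (m : ℕ) : Hdet 1 m = 1 := by
  rw [Hdet]
  have : (Matrix.of fun i j : Fin m => (catalan (1 + ↑i + ↑j) : ℤ))
      = (Matrix.of fun i j : Fin m => (catalan (↑i + ↑j + 1) : ℤ)) := by
    ext i j
    simp only [Matrix.of_apply]
    congr 2
    omega
  rw [this, det_hankel_base 1 m (by omega)]

lemma Hdet_pos_of_eq {r x : ℕ} (h : Hdet r x * (Qr (r-1) 0 : ℤ) = (Qr (r-1) x : ℤ)) :
    0 < Hdet r x := by
  have h1 : (0:ℤ) < (Qr (r-1) 0 : ℤ) := by exact_mod_cast Qr_pos _ _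
  have h2 : (0:ℤ) < (Qr (r-1) x : ℤ) := by exact_mod_cast Qr_pos _ _
  nlinarith

theorem MAIN : ∀ r m : ℕ, Hdet r m * (Qr (r-1) 0 : ℤ) = (Qr (r-1) m : ℤ) := by
  intro r
  induction r using Nat.strong_induction_on with
  | _ r IH =>
    match r with
    | 0 => intro m; simp [Hdet_zero, show (0:ℕ)-1 = 0 from rfl, Qr_zero]
    | 1 => intro m; simp [Hdet_one, show (1:ℕ)-1 = 0 from rfl, Qr_zero]
    | (s+2) =>
      have IHs : ∀ m, Hdet s m * (Qr (s-1) 0 : ℤ) = (Qr (s-1) m : ℤ) := IH s (by omega)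
      have IHs1 : ∀ m, Hdet (s+1) m * (Qr s 0 : ℤ) = (Qr s m : ℤ) := by
        have := IH (s+1) (by omega)
        simpa [show s+1-1 = s from rfl] using this
      intro m
      simp only [show s+2-1 = s+1 from rfl]
      induction m with
      | zero => simp [Hdet_size_zero]
      | succ m ihm =>
        -- Desnanot–Jacobi on the (m+2)×(m+2) Hankel matrix of shift s
        set A : Matrix (Fin (m+2)) (Fin (m+2)) ℤ :=
          Matrix.of fun i j : Fin (m+2) => (catalan (s + ↑i + ↑j) : ℤ) with hA
        have sub1 : A.submatrix Fin.succ Fin.succ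
            = Matrix.of fun i j : Fin (m+1) => (catalan (s+2 + ↑i + ↑j) : ℤ) := by
          ext i j
          simp only [Matrix.submatrix_apply, Matrix.of_apply, hA, Fin.val_succ]
          congr 2
          omega
        have sub2 : A.submatrix Fin.castSucc Fin.castSucc
            = Matrix.of fun i j : Fin (m+1) => (catalan (s + ↑i + ↑j) : ℤ) := by
          ext i j
          simp only [Matrix.submatrix_apply, Matrix.of_apply, hA, Fin.coe_castSucc]
        have sub3 : A.submatrix Fin.succ Fin.castSucc
            = Matrix.of fun i j : Fin (m+1) => (catalan (s+1 + ↑i + ↑j) : ℤ) := by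
          ext i j
          simp only [Matrix.submatrix_apply, Matrix.of_apply, hA, Fin.val_succ, Fin.coe_castSucc]
          congr 2
          omega
        have sub4 : A.submatrix Fin.castSucc Fin.succ
            = Matrix.of fun i j : Fin (m+1) => (catalan (s+1 + ↑i + ↑j) : ℤ) := by
          ext i j
          simp only [Matrix.submatrix_apply, Matrix.of_apply, hA, Fin.val_succ, Fin.coe_castSucc]
          congr 2
          omega
        have sub5 : A.submatrix (fun i : Fin m => Fin.castSucc (Fin.succ i))
              (fun i : Fin m => Fin.castSucc (Fin.succ i))
            = Matrix.of fun i j : Fin m => (catalan (s+2 + ↑i + ↑j) : ℤ) := by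
          ext i j
          simp only [Matrix.submatrix_apply, Matrix.of_apply, hA, Fin.val_succ, Fin.coe_castSucc]
          congr 2
          omega
        have hdj := dj_weak m A
        rw [sub1, sub2, sub3, sub4, sub5] at hdj
        have hdj' : Hdet s (m+2) * (Hdet (s+2) (m+1) * Hdet s (m+1)
              - Hdet (s+1) (m+1) * Hdet (s+1) (m+1))
            = Hdet s (m+2) ^ 2 * Hdet (s+2) m := hdj
        have hpos : 0 < Hdet s (m+2) := Hdet_pos_of_eq (IHs (m+2))
        have hne : Hdet s (m+2) ≠ 0 := hpos.ne'
        have h1 : Hdet (s+2) (m+1) * Hdet s (m+1)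
            = Hdet s (m+2) * Hdet (s+2) m + Hdet (s+1) (m+1)^2 := by
          have hc : Hdet s (m+2) * (Hdet (s+2) (m+1) * Hdet s (m+1)
                - Hdet (s+1) (m+1) * Hdet (s+1) (m+1))
              = Hdet s (m+2) * (Hdet s (m+2) * Hdet (s+2) m) := by
            linear_combination hdj'
          have := mul_left_cancel₀ hne hc
          linarith [sq_nonneg (Hdet (s+1) (m+1))]
        have h2 := IHs (m+1)
        have h3 := IHs (m+2)
        have h4 := IHs1 (m+1)
        have h5 : Hdet (s+2) m * (Qr (s+1) 0 : ℤ) = (Qr (s+1) m : ℤ) := ihm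
        have h6 := congrArg (Nat.cast (R := ℤ)) (starQ s m)
        push_cast at h6
        have hC : ((Qr (s-1) (m+1) : ℤ) * ((Qr s 0 : ℤ))^2) ≠ 0 := by
          have p1 : (0:ℤ) < (Qr (s-1) (m+1) : ℤ) := by exact_mod_cast Qr_pos _ _
          have p2 : (0:ℤ) < (Qr s 0 : ℤ) := by exact_mod_cast Qr_pos _ _
          positivity
        have key : (Hdet (s+2) (m+1) * (Qr (s+1) 0 : ℤ))
              * ((Qr (s-1) (m+1) : ℤ) * ((Qr s 0 : ℤ))^2)
            = ((Qr (s+1) (m+1) : ℤ))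
              * ((Qr (s-1) (m+1) : ℤ) * ((Qr s 0 : ℤ))^2) := by
          linear_combination
            ((Qr (s+1) 0 : ℤ) * (Qr (s-1) 0 : ℤ) * ((Qr s 0 : ℤ))^2) * h1
            - (Hdet (s+2) (m+1) * (Qr (s+1) 0 : ℤ) * ((Qr s 0 : ℤ))^2) * h2
            + (((Qr s 0 : ℤ))^2 * (Qr (s+1) m : ℤ)) * h3
            + ((Qr (s-1) 0 : ℤ) * (Qr (s+1) 0 : ℤ)
                * (Hdet (s+1) (m+1) * (Qr s 0 : ℤ) + (Qr s (m+1) : ℤ))) * h4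
            + ((Qr (s-1) 0 : ℤ) * ((Qr s 0 : ℤ))^2 * Hdet s (m+2)) * h5
            - h6
        exact mul_right_cancel₀ hC key

/-- For `n ≥ g ≥ 1`, let `b₀(n)` be the integer Hankel determinant of Catalan
numbers `det(c_{g+i+j−2})_{1 ≤ i,j ≤ (n−g)/2}` if `n ≡ g (mod 2)`, and
`det(c_{g+i+j−1})_{1 ≤ i,j ≤ (n−g−1)/2}` otherwise. Then `b₀(n) ≠ 0`, and any
prime `ℓ` not dividing `(n−g+1)(n−g+2)⋯(n+g−1)` does not divide `b₀(n)`. -/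
theorem b_zero_ne_zero_and_prime_nondivisibility
    (g n : ℕ) (hg : 1 ≤ g) (hn : g ≤ n) :
    let b0 : ℤ :=
      if n % 2 = g % 2 then
        Matrix.det (Matrix.of fun i j : Fin ((n - g) / 2) =>
          (catalan (g + i + j) : ℤ))
      else
        Matrix.det (Matrix.of fun i j : Fin ((n - g - 1) / 2) =>
          (catalan (g + i + j + 1) : ℤ))
    b0 ≠ 0 ∧
      ∀ ℓ : ℕ, ℓ.Prime →
        ¬ ((ℓ : ℤ) ∣ ∏ t ∈ Finset.Icc (n - g + 1) (n + g - 1), (t : ℤ)) →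
        ¬ ((ℓ : ℤ) ∣ b0) := by
  intro b0
  -- identify b0 with Hdet in both parity cases
  have hb0 : (b0 = Hdet g ((n-g)/2) ∧ n % 2 = g % 2)
      ∨ (b0 = Hdet (g+1) ((n-g-1)/2) ∧ n % 2 ≠ g % 2) := by
    by_cases hpar : n % 2 = g % 2
    · left
      refine ⟨?_, hpar⟩
      show (if n % 2 = g % 2 then _ else _) = _
      rw [if_pos hpar]
      rfl
    · right
      refine ⟨?_, hpar⟩
      show (if n % 2 = g % 2 then _ else _) = _
      rw [if_neg hpar]
      rw [Hdet]
      congr 1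
      ext i j
      simp only [Matrix.of_apply]
      congr 2
      omega
  -- common argument
  have main : ∀ (r M : ℕ), (∀ i j : ℕ, 1 ≤ i → i ≤ j → j ≤ r - 1 →
        i + j + 2*M ∈ Finset.Icc (n - g + 1) (n + g - 1)) →
      Hdet r M ≠ 0 ∧
      ∀ ℓ : ℕ, ℓ.Prime →
        ¬ ((ℓ : ℤ) ∣ ∏ t ∈ Finset.Icc (n - g + 1) (n + g - 1), (t : ℤ)) →
        ¬ ((ℓ : ℤ) ∣ Hdet r M) := by
    intro r M hmem
    have hmain := MAIN r M
    constructor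
    · intro h0
      rw [h0, zero_mul] at hmain
      have := Qr_pos (r-1) M
      have : Qr (r-1) M = 0 := by exact_mod_cast hmain.symm
      omega
    · intro ℓ hℓ hnd hdvd
      have hdvdN : (ℓ:ℤ) ∣ (Qr (r-1) M : ℤ) := by
        rw [← hmain]
        exact Dvd.dvd.mul_right hdvd _
      have hdvdN' : ℓ ∣ Qr (r-1) M := by exact_mod_cast hdvdN
      rw [Qr] at hdvdN'
      obtain ⟨i, hi, hdvd2⟩ := hℓ.prime.exists_mem_finset_dvd hdvdN'
      obtain ⟨j, hj, hdvd3⟩ := hℓ.prime.exists_mem_finset_dvd hdvd2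
      simp only [Finset.mem_Icc] at hi hj
      have hmem' := hmem i j hi.1 hj.1 hj.2
      apply hnd
      have : ((i + j + 2*M : ℕ) : ℤ) ∣ ∏ t ∈ Finset.Icc (n - g + 1) (n + g - 1), (t : ℤ) :=
        Finset.dvd_prod_of_mem (f := fun t : ℕ => (t : ℤ)) hmem'
      exact dvd_trans (by exact_mod_cast hdvd3) this
  rcases hb0 with ⟨hb, hpar⟩ | ⟨hb, hpar⟩
  · rw [hb]
    apply main
    intro i j h1 hij hjr
    have h2M : 2 * ((n-g)/2) = n - g := by omega
    rw [Finset.mem_Icc]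
    omega
  · rw [hb]
    apply main
    intro i j h1 hij hjr
    have h2M : 2 * ((n-g-1)/2) = n - g - 1 := by omega
    rw [Finset.mem_Icc]
    omega
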